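/- For every nonzero real number a and every integer n ≥ 3, the degree of 𝓑_{a,a}^n (the case of the circle, a = b) equals (n−1)/2 if n is odd and n/2 − 1 if n is even. -/

import Mathlib

/-- The k-th Taylor coefficient of √(1+t) at t = 0:
`c k = (−1)^(k+1)·(2k choose k)/(4^k·(2k−1))` (note `2k−1 = −1` when `k = 0`, so `c 0 = 1`). -/
noncomputable def sqrtCoeff (k : ℕ) : ℚ :=
  (-1) ^ (k + 1) * (Nat.choose (2 * k) k : ℚ) / (4 ^ k * (2 * (k : ℚ) - 1))

/-- The polynomial `B_k^{a,b} = Σ_{u+v+w=k} c_u c_v c_w · a^{−u} b^{−v} · (a−X)^u (b−X)^v`. -/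
noncomputable def Bpoly (a b : ℝ) (k : ℕ) : Polynomial ℝ :=
  ∑ u ∈ Finset.range (k + 1), ∑ v ∈ Finset.range (k + 1 - u),
    Polynomial.C ((sqrtCoeff u : ℝ) * (sqrtCoeff v : ℝ) * (sqrtCoeff (k - u - v) : ℝ)
        * a⁻¹ ^ u * b⁻¹ ^ v) *
      (Polynomial.C a - Polynomial.X) ^ u * (Polynomial.C b - Polynomial.X) ^ v

/-- Cayley's determinant `𝓑_{a,b}^n`: for odd `n = 2m+1` it is the determinant of the
`m×m` matrix with `(i,j)` entry `B_{i+j}` (`1 ≤ i,j ≤ m`); for even `n = 2m` it is the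
determinant of the `(m−1)×(m−1)` matrix with `(i,j)` entry `B_{i+j+1}` (`1 ≤ i,j ≤ m−1`). -/
noncomputable def cayleyPoly (a b : ℝ) (n : ℕ) : Polynomial ℝ :=
  if Odd n then
    Matrix.det (Matrix.of fun i j : Fin (n / 2) => Bpoly a b (i.val + j.val + 2))
  else
    Matrix.det (Matrix.of fun i j : Fin (n / 2 - 1) => Bpoly a b (i.val + j.val + 3))

open Finset Polynomial Matrix

lemma two_k_sub_one_ne (k : ℕ) : (2 * (k:ℚ) - 1) ≠ 0 := by
  intro h
  have h2 : (2 * k : ℚ) = 1 := by linarith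
  have : (2 * k : ℕ) = 1 := by exact_mod_cast h2
  omega

lemma sqrtCoeff_zero : sqrtCoeff 0 = 1 := by norm_num [sqrtCoeff]

lemma sqrtCoeff_rec (k : ℕ) :
    (2 * ((k:ℚ) + 1)) * sqrtCoeff (k + 1) = (1 - 2 * k) * sqrtCoeff k := by
  have hc : ((2 * (k+1)).choose (k+1) : ℚ) * ((k:ℚ)+1) = 2 * (2*(k:ℚ)+1) * ((2*k).choose k : ℚ) := by
    have := Nat.succ_mul_centralBinom_succ k
    have h1 : Nat.centralBinom (k+1) = (2*(k+1)).choose (k+1) := Nat.centralBinom_eq_two_mul_choose _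
    have h2 : Nat.centralBinom k = (2*k).choose k := Nat.centralBinom_eq_two_mul_choose _
    rw [h1, h2] at this
    exact_mod_cast congrArg (Nat.cast : ℕ → ℚ) (by linarith [this] : (2*(k+1)).choose (k+1) * (k+1) = 2*(2*k+1)*((2*k).choose k))
  unfold sqrtCoeff
  have h1 := two_k_sub_one_ne k
  have h2 := two_k_sub_one_ne (k+1)
  have h4 : (4:ℚ)^k ≠ 0 := by positivity
  push_cast at h2 ⊢
  field_simp
  linear_combination ((-1:ℚ)^k * 4^k * 2 * (2*(k:ℚ)-1)) * hc

noncomputable def Dconv (s : ℕ) : ℚ := ∑ u ∈ Finset.range (s+1), sqrtCoeff u * sqrtCoeff (s - u)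

lemma Dconv_zero : Dconv 0 = 1 := by simp [Dconv, sqrtCoeff_zero]

lemma Dconv_one : Dconv 1 = 1 := by
  have h1 : sqrtCoeff 1 = 1/2 := by norm_num [sqrtCoeff]
  simp [Dconv, Finset.sum_range_succ, sqrtCoeff_zero, h1]
  norm_num

lemma Dconv_rec (s : ℕ) : ((s:ℚ)+1) * Dconv (s+1) = (1 - (s:ℚ)) * Dconv s := by
  classical
  set c := sqrtCoeff with hc
  -- A = ∑ u * c u * c (s+1-u)
  have refl2 : ∀ (n : ℕ), ∑ u ∈ Finset.range (n+1), ((n - u : ℕ):ℚ) * c u * c (n - u)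
      = ∑ u ∈ Finset.range (n+1), (u:ℚ) * c u * c (n - u) := by
    intro n
    rw [← Finset.sum_range_reflect (fun u => ((u:ℕ):ℚ) * c u * c (n - u)) (n+1)]
    apply Finset.sum_congr rfl
    intro u hu
    simp only [Finset.mem_range] at hu
    have h1 : n + 1 - 1 - u = n - u := by omega
    have h2 : n - (n - u) = u := by omega
    rw [h1, h2]
    ring
  have doubling : ∀ (n : ℕ), ((n:ℚ)) * Dconv n = 2 * ∑ u ∈ Finset.range (n+1), (u:ℚ) * c u * c (n - u) := by
    intro n
    have : ((n:ℚ)) * Dconv n = ∑ u ∈ Finset.range (n+1), ((u:ℚ) + ((n - u : ℕ):ℚ)) * c u * c (n - u) := by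
      rw [Dconv, Finset.mul_sum]
      apply Finset.sum_congr rfl
      intro u hu
      simp only [Finset.mem_range] at hu
      have : ((n - u : ℕ):ℚ) = (n:ℚ) - (u:ℚ) := by
        have : (u:ℚ) ≤ n := by exact_mod_cast Nat.le_of_lt_succ hu
        push_cast [Nat.cast_sub (by omega : u ≤ n)]
        ring
      rw [this]; ring
    have split : ∑ u ∈ Finset.range (n+1), ((u:ℚ) + ((n - u : ℕ):ℚ)) * c u * c (n - u)
        = (∑ u ∈ Finset.range (n+1), (u:ℚ) * c u * c (n - u))
          + ∑ u ∈ Finset.range (n+1), ((n - u : ℕ):ℚ) * c u * c (n - u) := by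
      rw [← Finset.sum_add_distrib]
      apply Finset.sum_congr rfl
      intro u hu
      ring
    rw [this, split, refl2 n]
    ring
  -- peel off u = 0 from A at level s+1
  have peel : ∑ u ∈ Finset.range (s+2), (u:ℚ) * c u * c (s+1-u)
      = ∑ j ∈ Finset.range (s+1), ((j:ℚ)+1) * c (j+1) * c (s-j) := by
    rw [Finset.sum_range_succ' (fun u => (u:ℚ) * c u * c (s+1-u)) (s+1)]
    simp only [Nat.cast_zero, zero_mul, mul_zero, add_zero]
    apply Finset.sum_congr rfl
    intro j hj
    simp only [Finset.mem_range] at hj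
    have : s + 1 - (j+1) = s - j := by omega
    rw [this]; push_cast; ring
  have step : 2 * ∑ j ∈ Finset.range (s+1), ((j:ℚ)+1) * c (j+1) * c (s-j)
      = ∑ j ∈ Finset.range (s+1), (1 - 2*(j:ℚ)) * c j * c (s-j) := by
    rw [Finset.mul_sum]
    apply Finset.sum_congr rfl
    intro j hj
    have := sqrtCoeff_rec j
    calc 2 * (((j:ℚ)+1) * c (j+1) * c (s-j)) = ((2 * ((j:ℚ)+1)) * sqrtCoeff (j+1)) * c (s-j) := by ring
      _ = ((1 - 2*(j:ℚ)) * sqrtCoeff j) * c (s-j) := by rw [this]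
      _ = (1 - 2*(j:ℚ)) * c j * c (s-j) := by ring
  have expand : ∑ j ∈ Finset.range (s+1), (1 - 2*(j:ℚ)) * c j * c (s-j)
      = Dconv s - 2 * ∑ j ∈ Finset.range (s+1), (j:ℚ) * c j * c (s-j) := by
    rw [Dconv, Finset.mul_sum, ← Finset.sum_sub_distrib]
    apply Finset.sum_congr rfl
    intro j hj; ring
  have h1 := doubling (s+1)
  have h2 := doubling s
  push_cast at h1
  -- (s+1) * D(s+1) = 2 * A = Ds - s*Ds
  rw [peel] at h1
  rw [h1, step, expand, ← h2]
  ring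

lemma Dconv_eq_zero {s : ℕ} (hs : 2 ≤ s) : Dconv s = 0 := by
  induction s with
  | zero => omega
  | succ m ih =>
    rcases Nat.lt_or_ge m 2 with hm | hm
    · interval_cases m
      · omega
      · have := Dconv_rec 1
        rw [Dconv_one] at this
        push_cast at this
        linarith
    · have := Dconv_rec m
      rw [ih hm] at this
      have hne : ((m:ℚ)+1) ≠ 0 := by positivity
      simp only [mul_zero] at this
      rcases mul_eq_zero.mp this with h | h
      · exact absurd h hne
      · exact h

def W : ℕ → ℤ → ℤ
  | 0, h => if h = 0 then 1 else 0
  | (N+1), h => W N (h-1) + W N (h+1)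

lemma W_zero_of_gt : ∀ (N : ℕ) (h : ℤ), (N:ℤ) < h → W N h = 0 := by
  intro N
  induction N with
  | zero => intro h hh; simp [W]; omega
  | succ M ih =>
    intro h hh
    simp only [W]
    rw [ih (h-1) (by push_cast at hh ⊢; omega), ih (h+1) (by push_cast at hh ⊢; omega)]
    ring

lemma W_symm : ∀ (N : ℕ) (h : ℤ), W N (-h) = W N h := by
  intro N
  induction N with
  | zero => intro h; simp only [W, neg_eq_zero]
  | succ M ih =>
    intro h
    simp only [W]
    rw [show -h - 1 = -(h+1) by ring, show -h + 1 = -(h-1) by ring, ih, ih]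
    ring

lemma W_zero_of_lt (N : ℕ) (h : ℤ) (hh : h < -(N:ℤ)) : W N h = 0 := by
  rw [← W_symm]
  exact W_zero_of_gt N (-h) (by omega)

lemma W_eq_choose : ∀ (N j : ℕ), W N ((N:ℤ) - 2 * j) = N.choose j := by
  intro N
  induction N with
  | zero =>
    intro j
    cases j with
    | zero => simp [W]
    | succ i => simp only [W, Nat.cast_zero, Nat.choose_succ_succ, Nat.choose]; split <;> [skip; simp] <;> omega
  | succ M ih =>
    intro j
    simp only [W]
    cases j with
    | zero =>
      rw [show ((M+1:ℕ):ℤ) - 2*((0:ℕ):ℤ) - 1 = (M:ℤ) - 2*((0:ℕ):ℤ) by push_cast; ring]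
      rw [ih 0]
      rw [show ((M+1:ℕ):ℤ) - 2*((0:ℕ):ℤ) + 1 = (M:ℤ) + 2 by push_cast; ring]
      rw [W_zero_of_gt M _ (by omega)]
      simp
    | succ i =>
      rw [show ((M+1:ℕ):ℤ) - 2*((i+1:ℕ):ℤ) - 1 = (M:ℤ) - 2*((i+1:ℕ):ℤ) by push_cast; ring]
      rw [show ((M+1:ℕ):ℤ) - 2*((i+1:ℕ):ℤ) + 1 = (M:ℤ) - 2*((i:ℕ):ℤ) by push_cast; ring]
      rw [ih (i+1), ih i]
      rw [Nat.choose_succ_succ]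
      push_cast
      ring

def Bal (N : ℕ) (h : ℤ) : ℤ := W N h - W N (-2 - h)

lemma Bal_rec (N : ℕ) (h : ℤ) : Bal (N+1) h = Bal N (h-1) + Bal N (h+1) := by
  simp only [Bal, W]
  rw [show -2 - h - 1 = -2 - (h+1) by ring, show -2 - h + 1 = -2 - (h-1) by ring]
  ring

lemma Bal_two_step (N : ℕ) (h : ℤ) :
    Bal (N+2) h = Bal N (h-2) + 2 * Bal N h + Bal N (h+2) := by
  rw [show N+2 = (N+1)+1 from rfl, Bal_rec, Bal_rec, Bal_rec]
  rw [show h - 1 - 1 = h - 2 by ring, show h - 1 + 1 = h by ring,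
      show h + 1 - 1 = h by ring, show h + 1 + 1 = h + 2 by ring]
  ring

lemma Bal_antisymm (N : ℕ) (h : ℤ) : Bal N (-2 - h) = - Bal N h := by
  simp only [Bal]
  rw [show -2 - (-2 - h) = h by ring]
  ring

lemma Bal_neg_one (N : ℕ) : Bal N (-1) = 0 := by
  have := Bal_antisymm N (-1)
  simp only [show (-2 : ℤ) - (-1) = -1 by ring] at this
  linarith

lemma Bal_zero_of_gt (N : ℕ) (h : ℤ) (hh : (N:ℤ) < h) : Bal N h = 0 := by
  rw [Bal, W_zero_of_gt N h hh, W_zero_of_lt N _ (by omega)]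
  ring

lemma Bal_diag (N : ℕ) : Bal N N = 1 := by
  have h1 : W N ((N:ℤ) - 2*((0:ℕ):ℤ)) = N.choose 0 := W_eq_choose N 0
  have h2 : W N (-2 - (N:ℤ)) = 0 := W_zero_of_lt N _ (by omega)
  simp only [Nat.cast_zero, mul_zero, sub_zero, Nat.choose_zero_right, Nat.cast_one] at h1
  rw [Bal, h1, h2]
  ring

noncomputable def SB (e n m : ℕ) : ℤ :=
  ∑ k ∈ Finset.range (n+1), Bal (2*n+e) (2*k+e) * Bal (2*m+e) (2*k+e)

lemma SB_ext (e n m K : ℕ) (hK : n+1 ≤ K) :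
    ∑ k ∈ Finset.range K, Bal (2*n+e) (2*k+e) * Bal (2*m+e) (2*k+e) = SB e n m := by
  rw [SB]
  symm
  apply Finset.sum_subset (Finset.range_subset_range.mpr hK)
  intro k hk hnk
  simp only [Finset.mem_range, not_lt] at hnk
  rw [Bal_zero_of_gt (2*n+e) _ (by push_cast; omega), zero_mul]

lemma boundary (e N M : ℕ) (he : e ≤ 1) :
    Bal N ((e:ℤ) - 2) * Bal M e = Bal N e * Bal M ((e:ℤ) - 2) := by
  interval_cases e
  · have h1 : Bal N (-2 : ℤ) = - Bal N 0 := by simpa using Bal_antisymm N 0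
    have h2 : Bal M (-2 : ℤ) = - Bal M 0 := by simpa using Bal_antisymm M 0
    norm_num
    rw [h1, h2]; ring
  · norm_num
    rw [Bal_neg_one, Bal_neg_one]; ring

lemma SB_shift (e n m : ℕ) (he : e ≤ 1) : SB e (n+1) m = SB e n (m+1) := by
  set K := n + m + 2 with hK
  set F : ℤ → ℤ := fun x => Bal (2*n+e) x with hF
  set G : ℤ → ℤ := fun x => Bal (2*m+e) x with hG
  have hKpos : K = (K-1)+1 := by omega
  have hLHS : SB e (n+1) m = ∑ k ∈ Finset.range K,
      (F (2*k+e-2) * G (2*k+e) + 2 * (F (2*k+e) * G (2*k+e)) + F (2*k+e+2) * G (2*k+e)) := by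
    rw [← SB_ext e (n+1) m K (by omega)]
    apply Finset.sum_congr rfl
    intro k hk
    rw [show (2*(n+1)+e) = (2*n+e)+2 by omega, Bal_two_step]
    simp only [hF, hG]
    ring
  have hRHS : SB e n (m+1) = ∑ k ∈ Finset.range K,
      (F (2*k+e) * G (2*k+e-2) + 2 * (F (2*k+e) * G (2*k+e)) + F (2*k+e) * G (2*k+e+2)) := by
    rw [← SB_ext e n (m+1) K (by omega)]
    apply Finset.sum_congr rfl
    intro k hk
    rw [show (2*(m+1)+e) = (2*m+e)+2 by omega, Bal_two_step]
    simp only [hF, hG]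
    ring
  have peelF : ∑ k ∈ Finset.range K, F (2*k+e-2) * G (2*k+e)
      = F ((e:ℤ)-2) * G e + ∑ j ∈ Finset.range (K-1), F (2*j+e) * G (2*j+e+2) := by
    rw [hKpos, Finset.sum_range_succ' (fun k : ℕ => F (2*(k:ℤ)+e-2) * G (2*(k:ℤ)+e)) (K-1),
      add_comm]
    congr 1
    · norm_num
    · apply Finset.sum_congr rfl
      intro j hj
      push_cast
      ring_nf
  have peelG : ∑ k ∈ Finset.range K, F (2*k+e) * G (2*k+e-2)
      = F e * G ((e:ℤ)-2) + ∑ j ∈ Finset.range (K-1), F (2*j+e+2) * G (2*j+e) := by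
    rw [hKpos, Finset.sum_range_succ' (fun k : ℕ => F (2*(k:ℤ)+e) * G (2*(k:ℤ)+e-2)) (K-1),
      add_comm]
    congr 1
    · norm_num
    · apply Finset.sum_congr rfl
      intro j hj
      push_cast
      ring_nf
  have dropF : ∑ k ∈ Finset.range K, F (2*k+e+2) * G (2*k+e)
      = ∑ k ∈ Finset.range (K-1), F (2*k+e+2) * G (2*k+e) := by
    rw [hKpos, Finset.sum_range_succ]
    have hz : F (2*((K-1:ℕ):ℤ)+e+2) = 0 := by
      apply Bal_zero_of_gt
      push_cast
      omega
    rw [hz, zero_mul, add_zero]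
    norm_num
  have dropG : ∑ k ∈ Finset.range K, F (2*k+e) * G (2*k+e+2)
      = ∑ k ∈ Finset.range (K-1), F (2*k+e) * G (2*k+e+2) := by
    rw [hKpos, Finset.sum_range_succ]
    have hz : G (2*((K-1:ℕ):ℤ)+e+2) = 0 := by
      apply Bal_zero_of_gt
      push_cast
      omega
    rw [hz, mul_zero, add_zero]
    norm_num
  have hbd : F ((e:ℤ)-2) * G e = F e * G ((e:ℤ)-2) := boundary e _ _ he
  rw [hLHS, hRHS]
  rw [Finset.sum_add_distrib, Finset.sum_add_distrib, Finset.sum_add_distrib,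
    Finset.sum_add_distrib]
  rw [peelF, peelG, dropF, dropG, hbd]
  ring

lemma SB_eq (e : ℕ) (he : e ≤ 1) : ∀ n m, SB e n m = SB e 0 (n+m) := by
  intro n
  induction n with
  | zero => intro m; simp
  | succ p ih =>
    intro m
    rw [SB_shift e p m he, ih (m+1)]
    congr 1
    omega

noncomputable def Tv (e q : ℕ) : ℤ := Bal (2*q+e) e

lemma SB_eq_Tv (e : ℕ) (he : e ≤ 1) (n m : ℕ) : SB e n m = Tv e (n+m) := by
  rw [SB_eq e he n m, SB, Tv]
  rw [Finset.sum_range_one]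
  norm_num
  rw [show ((e:ℤ) = ((e:ℕ):ℤ)) from rfl, Bal_diag e]
  ring

lemma Tv_zero_eq (k : ℕ) : Tv 0 k = ((2*k).choose k : ℤ) - ((2*k).choose (k+1) : ℤ) := by
  have h1 : W (2*k) 0 = (2*k).choose k := by
    have := W_eq_choose (2*k) k
    rw [show ((2*k:ℕ):ℤ) - 2*(k:ℕ) = 0 by push_cast; ring] at this
    exact this
  have h2 : W (2*k) (-2) = (2*k).choose (k+1) := by
    have := W_eq_choose (2*k) (k+1)
    rw [show ((2*k:ℕ):ℤ) - 2*((k+1:ℕ):ℤ) = -2 by push_cast; ring] at this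
    exact this
  simp only [Tv, Bal, Nat.add_zero, Nat.cast_zero]
  rw [show (-2 - (0:ℤ)) = -2 by ring, h1, h2]

lemma Tv_one_eq (k : ℕ) : Tv 1 k = ((2*k+1).choose k : ℤ) - ((2*k+1).choose (k+2) : ℤ) := by
  have h1 : W (2*k+1) 1 = (2*k+1).choose k := by
    have := W_eq_choose (2*k+1) k
    rw [show ((2*k+1:ℕ):ℤ) - 2*(k:ℕ) = 1 by push_cast; ring] at this
    exact this
  have h2 : W (2*k+1) (-3) = (2*k+1).choose (k+2) := by
    have := W_eq_choose (2*k+1) (k+2)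
    rw [show ((2*k+1:ℕ):ℤ) - 2*((k+2:ℕ):ℤ) = -3 by push_cast; ring] at this
    exact this
  simp only [Tv, Bal, Nat.cast_one]
  rw [show (-2 - (1:ℤ)) = -3 by ring, h1, h2]

lemma sqrtCoeff_Tv_zero (k : ℕ) :
    sqrtCoeff (k+1) = (-1)^k * ((Tv 0 k : ℤ) : ℚ) / 2^(2*k+1) := by
  rw [Tv_zero_eq]
  have key : ((2*(k+1)).choose (k+1) : ℚ) = 2*(2*(k:ℚ)+1) * (((2*k).choose k : ℚ) - ((2*k).choose (k+1) : ℚ)) := by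
    have h1 : ((k:ℚ)+1) * ((2*(k+1)).choose (k+1) : ℚ) = 2*(2*(k:ℚ)+1) * ((2*k).choose k : ℚ) := by
      have := Nat.succ_mul_centralBinom_succ k
      rw [Nat.centralBinom_eq_two_mul_choose, Nat.centralBinom_eq_two_mul_choose] at this
      exact_mod_cast congrArg (Nat.cast : ℕ → ℚ) this
    have h2 : ((2*k).choose (k+1) : ℚ) * ((k:ℚ)+1) = ((2*k).choose k : ℚ) * (k:ℚ) := by
      have := Nat.choose_succ_right_eq (2*k) k
      rw [show 2*k - k = k by omega] at this
      exact_mod_cast congrArg (Nat.cast : ℕ → ℚ) this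
    have hk : ((k:ℚ)+1) ≠ 0 := by positivity
    field_simp at h1
    apply mul_left_cancel₀ hk
    linear_combination h1 + 2*(2*(k:ℚ)+1) * h2
  unfold sqrtCoeff
  have h2 : (2 * ((k:ℚ)+1) - 1) ≠ 0 := by
    intro h
    have h2 : (2*(k+1) : ℚ) = 1 := by push_cast at h ⊢; linarith
    have : (2*(k+1) : ℕ) = 1 := by exact_mod_cast h2
    omega
  push_cast [key]
  field_simp
  ring_nf
  rw [show (4:ℚ)^k = 2^(k*2) by rw [show (4:ℚ) = 2^2 by norm_num, ← pow_mul, mul_comm]]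

lemma sqrtCoeff_Tv_one (k : ℕ) :
    sqrtCoeff (k+2) = (-1)^(k+1) * ((Tv 1 k : ℤ) : ℚ) / 2^(2*k+3) := by
  rw [Tv_one_eq]
  have hsymm : (2*k+1).choose (k+1) = (2*k+1).choose k := by
    rw [← Nat.choose_symm (by omega : k+1 ≤ 2*k+1)]
    congr 1
    omega
  have key : ((2*(k+2)).choose (k+2) : ℚ)
      = 2*(2*(k:ℚ)+3) * (((2*k+1).choose k : ℚ) - ((2*k+1).choose (k+2) : ℚ)) := by
    have hA : ((k:ℚ)+2) * ((2*(k+2)).choose (k+2) : ℚ)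
        = 2*(2*(k:ℚ)+3) * ((2*(k+1)).choose (k+1) : ℚ) := by
      have := Nat.succ_mul_centralBinom_succ (k+1)
      rw [Nat.centralBinom_eq_two_mul_choose, Nat.centralBinom_eq_two_mul_choose] at this
      have := congrArg (Nat.cast : ℕ → ℚ) this
      push_cast at this ⊢
      rw [show k+1+1 = k+2 by omega] at this
      push_cast at this
      linarith
    have hB : ((2*(k+1)).choose (k+1) : ℚ) = 2 * ((2*k+1).choose k : ℚ) := by
      have h1 : (2*(k+1)).choose (k+1) = (2*k+1).choose k + (2*k+1).choose (k+1) := by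
        rw [show 2*(k+1) = (2*k+1)+1 by omega]
        exact Nat.choose_succ_succ (2*k+1) k
      rw [h1, hsymm]
      push_cast
      ring
    have hC : ((2*k+1).choose (k+2) : ℚ) * ((k:ℚ)+2) = ((2*k+1).choose k : ℚ) * (k:ℚ) := by
      have := Nat.choose_succ_right_eq (2*k+1) (k+1)
      rw [show 2*k+1 - (k+1) = k by omega, hsymm] at this
      have := congrArg (Nat.cast : ℕ → ℚ) this
      push_cast at this
      rw [show k+1+1 = k+2 by omega] at this
      push_cast at this
      linarith
    have hk : ((k:ℚ)+2) ≠ 0 := by positivity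
    apply mul_left_cancel₀ hk
    linear_combination hA + 2*(2*(k:ℚ)+3) * hB + 2*(2*(k:ℚ)+3) * hC
  unfold sqrtCoeff
  have h2 : (2 * ((k:ℚ)+2) - 1) ≠ 0 := by
    intro h
    have : (2*(k+2) : ℕ) = 1 := by exact_mod_cast (by push_cast at h ⊢; linarith : (2*(k+2):ℚ) = 1)
    omega
  push_cast [key]
  push_cast at h2
  field_simp
  ring_nf
  rw [show (4:ℚ)^k = 2^(k*2) by rw [show (4:ℚ) = 2^2 by norm_num, ← pow_mul, mul_comm]]

lemma Bpoly_circle (a : ℝ) (ha : a ≠ 0) (k : ℕ) :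
    Bpoly a a (k+1) = Polynomial.C ((sqrtCoeff (k+1) : ℝ) + (sqrtCoeff k : ℝ))
      + Polynomial.C (-(sqrtCoeff k : ℝ) * a⁻¹) * Polynomial.X := by
  set P : Polynomial ℝ := Polynomial.C a - Polynomial.X with hP
  set f : ℕ → ℕ → Polynomial ℝ := fun u v =>
    Polynomial.C (((sqrtCoeff u : ℝ) * (sqrtCoeff v : ℝ)) * (sqrtCoeff (k+1-u-v) : ℝ)
      * a⁻¹ ^ (u+v)) * P ^ (u+v) with hf
  have step1 : Bpoly a a (k+1) = ∑ u ∈ Finset.range (k+2), ∑ v ∈ Finset.range (k+2-u), f u v := by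
    rw [Bpoly]
    apply Finset.sum_congr rfl
    intro u hu
    apply Finset.sum_congr rfl
    intro v hv
    simp only [hf]
    rw [pow_add, pow_add]
    rw [hP]
    ring
  have step2 : ∑ u ∈ Finset.range (k+2), ∑ v ∈ Finset.range (k+2-u), f u v
      = ∑ s ∈ Finset.range (k+2), ∑ j ∈ Finset.range (s+1), f j (s-j) :=
    (Finset.sum_range_diag_flip (k+2) f).symm
  have inner : ∀ s ∈ Finset.range (k+2), (∑ j ∈ Finset.range (s+1), f j (s-j))
      = Polynomial.C (((Dconv s : ℚ):ℝ) * (sqrtCoeff (k+1-s) : ℝ) * a⁻¹^s) * P^s := by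
    intro s hs
    have hcast : ((Dconv s : ℚ):ℝ) = ∑ j ∈ Finset.range (s+1), ((sqrtCoeff j :ℝ) * (sqrtCoeff (s-j) : ℝ)) := by
      rw [Dconv]
      push_cast
      rfl
    rw [hcast, Finset.sum_mul, Finset.sum_mul, map_sum, Finset.sum_mul]
    apply Finset.sum_congr rfl
    intro j hj
    simp only [Finset.mem_range] at hj
    have h1 : j + (s - j) = s := by omega
    have h2 : k + 1 - j - (s - j) = k + 1 - s := by omega
    simp only [hf, h1, h2]
  rw [step1, step2, Finset.sum_congr rfl inner]
  have vanish : ∀ s ∈ Finset.range (k+2), s ∉ Finset.range 2 →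
      Polynomial.C (((Dconv s : ℚ):ℝ) * (sqrtCoeff (k+1-s) : ℝ) * a⁻¹^s) * P^s = 0 := by
    intro s hs hns
    simp only [Finset.mem_range, not_lt] at hns
    rw [Dconv_eq_zero hns]
    simp
  rw [← Finset.sum_subset (Finset.range_subset_range.mpr (by omega : 2 ≤ k+2)) vanish]
  rw [Finset.sum_range_succ, Finset.sum_range_one]
  rw [Dconv_zero, Dconv_one]
  simp only [Rat.cast_one, one_mul, mul_one, pow_zero, pow_one]
  rw [hP, mul_sub]
  rw [show k + 1 - 1 = k by omega, show k + 1 - 0 = k + 1 by omega]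
  rw [show Polynomial.C ((sqrtCoeff k:ℝ) * a⁻¹) * Polynomial.C a = Polynomial.C ((sqrtCoeff k:ℝ))
    by rw [← _root_.map_mul, mul_assoc, inv_mul_cancel₀ ha, mul_one]]
  rw [map_add, show (-(sqrtCoeff k:ℝ) * a⁻¹) = -((sqrtCoeff k:ℝ) * a⁻¹) by ring, map_neg]
  ring

lemma det_linear_natDegree {s : ℕ} (A B : Matrix (Fin s) (Fin s) ℝ) (hB : B.det ≠ 0) :
    (Matrix.det (A.map Polynomial.C + (X : ℝ[X]) • B.map Polynomial.C)).natDegree = s := by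
  have hBu : IsUnit B.det := isUnit_iff_ne_zero.mpr hB
  have hInv : B * (B⁻¹ * A) = A := by
    rw [← Matrix.mul_assoc, Matrix.mul_nonsing_inv B hBu, Matrix.one_mul]
  set N : Matrix (Fin s) (Fin s) ℝ := -(B⁻¹ * A) with hN
  have key : A.map Polynomial.C + (X : ℝ[X]) • B.map Polynomial.C
      = B.map Polynomial.C * charmatrix N := by
    rw [charmatrix, Matrix.mul_sub]
    have h1 : B.map Polynomial.C * Matrix.scalar (Fin s) (X : ℝ[X]) = (X : ℝ[X]) • B.map Polynomial.C := by
      rw [Matrix.scalar_apply]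
      ext i j
      rw [Matrix.mul_diagonal, Matrix.smul_apply, smul_eq_mul, mul_comm]
    have h2 : B.map Polynomial.C * (Polynomial.C : ℝ →+* ℝ[X]).mapMatrix N = -(A.map Polynomial.C) := by
      rw [RingHom.mapMatrix_apply, ← Matrix.map_mul]
      rw [hN, Matrix.mul_neg, hInv]
      ext i j
      simp
    rw [h1, h2, sub_neg_eq_add]
    rw [add_comm]
  rw [key, Matrix.det_mul, ← Matrix.charpoly]
  rw [show (B.map Polynomial.C).det = Polynomial.C B.det by
    rw [RingHom.map_det]; rfl]
  rw [Polynomial.natDegree_C_mul hB]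
  rw [Matrix.charpoly_natDegree_eq_dim]
  simp

noncomputable def Amat (e sz : ℕ) : Matrix (Fin sz) (Fin sz) ℝ :=
  Matrix.of fun i k => ((Bal (2*(i:ℕ)+e) (2*(k:ℕ)+e) : ℤ) : ℝ)

lemma Amat_det (e sz : ℕ) : (Amat e sz).det = 1 := by
  have htri : (Amat e sz).BlockTriangular OrderDual.toDual := by
    intro i j hij
    have : (i:ℕ) < (j:ℕ) := hij
    simp only [Amat, Matrix.of_apply]
    rw [Bal_zero_of_gt _ _ (by push_cast; omega)]
    simp
  rw [Matrix.det_of_lowerTriangular _ htri]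
  apply Finset.prod_eq_one
  intro i _
  simp only [Amat, Matrix.of_apply]
  have : ((2*(i:ℕ)+e : ℕ) : ℤ) = 2*((i:ℕ):ℤ)+(e:ℤ) := by push_cast; ring
  rw [← this, Bal_diag]
  simp

lemma Hmat_eq (e sz : ℕ) (he : e ≤ 1) :
    (Matrix.of fun i j : Fin sz => ((Tv e ((i:ℕ)+(j:ℕ)) : ℤ) : ℝ))
      = Amat e sz * (Amat e sz)ᵀ := by
  ext i j
  rw [Matrix.mul_apply]
  simp only [Matrix.transpose_apply, Amat, Matrix.of_apply]
  rw [← SB_eq_Tv e he i j, ← SB_ext e i j sz (by omega : (i:ℕ)+1 ≤ sz)]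
  rw [Fin.sum_univ_eq_sum_range (fun k => ((Bal (2*(i:ℕ)+e) (2*(k:ℕ)+e) : ℤ) : ℝ) * ((Bal (2*(j:ℕ)+e) (2*(k:ℕ)+e) : ℤ) : ℝ)) sz]
  push_cast
  rfl

lemma Hmat_det (e sz : ℕ) (he : e ≤ 1) :
    (Matrix.of fun i j : Fin sz => ((Tv e ((i:ℕ)+(j:ℕ)) : ℤ) : ℝ)).det = 1 := by
  rw [Hmat_eq e sz he, Matrix.det_mul, Matrix.det_transpose, Amat_det]
  norm_num

lemma det_scaled (e sz : ℕ) (he : e ≤ 1) (κ : ℝ) (hκ : κ ≠ 0) :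
    (Matrix.of fun i j : Fin sz =>
      κ * ((-1)^(i:ℕ) / 4^(i:ℕ)) * ((-1)^(j:ℕ) / 4^(j:ℕ)) * ((Tv e ((i:ℕ)+(j:ℕ)) : ℤ) : ℝ)).det ≠ 0 := by
  set d : Fin sz → ℝ := fun i => (-1)^(i:ℕ) / 4^(i:ℕ) with hd
  set H : Matrix (Fin sz) (Fin sz) ℝ := Matrix.of fun i j => ((Tv e ((i:ℕ)+(j:ℕ)) : ℤ) : ℝ) with hH
  set M1 : Matrix (Fin sz) (Fin sz) ℝ := Matrix.of fun i j => d j * H i j with hM1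
  set M2 : Matrix (Fin sz) (Fin sz) ℝ := Matrix.of fun i j => d i * M1 i j with hM2
  have hEq : (Matrix.of fun i j : Fin sz =>
      κ * ((-1)^(i:ℕ) / 4^(i:ℕ)) * ((-1)^(j:ℕ) / 4^(j:ℕ)) * ((Tv e ((i:ℕ)+(j:ℕ)) : ℤ) : ℝ)) = κ • M2 := by
    ext i j
    simp only [hM2, hM1, hH, hd, Matrix.of_apply, Matrix.smul_apply, smul_eq_mul]
    ring
  have hdne : ∀ i : Fin sz, d i ≠ 0 := by
    intro i
    simp only [hd]
    positivity
  rw [hEq, Matrix.det_smul, hM2, Matrix.det_mul_column d M1, hM1, Matrix.det_mul_row d H,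
    Hmat_det e sz he]
  have : ∏ i, d i ≠ 0 := Finset.prod_ne_zero_iff.mpr (fun i _ => hdne i)
  simp only [smul_eq_mul, mul_one]
  positivity

/-- The case of the circle (Proposition 2.25): for `a = b` the degree of `𝓑_{a,a}^n`
equals `(n−1)/2` if `n` is odd and `n/2 − 1` if `n` is even. -/
theorem cayleyPoly_natDegree_circle (a : ℝ) (ha : a ≠ 0) (n : ℕ) (hn : 3 ≤ n) :
    (cayleyPoly a a n).natDegree = if Odd n then (n - 1) / 2 else n / 2 - 1 := by
  by_cases hodd : Odd n
  · rw [if_pos hodd]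
    rw [cayleyPoly, if_pos hodd]
    set m := n / 2 with hm
    have hans : (n - 1) / 2 = m := by
      obtain ⟨t, ht⟩ := hodd
      omega
    rw [hans]
    set Aent : Matrix (Fin m) (Fin m) ℝ :=
      Matrix.of fun i j => ((sqrtCoeff ((i:ℕ)+(j:ℕ)+2) : ℝ) + (sqrtCoeff ((i:ℕ)+(j:ℕ)+1) : ℝ)) with hAent
    set Bent : Matrix (Fin m) (Fin m) ℝ :=
      Matrix.of fun i j => (-(sqrtCoeff ((i:ℕ)+(j:ℕ)+1) : ℝ) * a⁻¹) with hBent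
    have hMeq : (Matrix.of fun i j : Fin m => Bpoly a a ((i:ℕ) + (j:ℕ) + 2))
        = Aent.map Polynomial.C + (X : ℝ[X]) • Bent.map Polynomial.C := by
      ext i j
      simp only [Matrix.add_apply, Matrix.smul_apply, Matrix.map_apply, Matrix.of_apply,
        hAent, hBent, smul_eq_mul]
      rw [show (i:ℕ) + (j:ℕ) + 2 = ((i:ℕ)+(j:ℕ)+1) + 1 by omega, Bpoly_circle a ha]
      rw [show (i:ℕ) + (j:ℕ) + 1 + 1 = (i:ℕ)+(j:ℕ)+2 by omega]
      ring
    rw [hMeq, det_linear_natDegree Aent Bent]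
    -- det Bent ≠ 0
    have : Bent = Matrix.of fun i j : Fin m =>
        (-(1:ℝ)/(2*a)) * ((-1)^(i:ℕ) / 4^(i:ℕ)) * ((-1)^(j:ℕ) / 4^(j:ℕ)) * ((Tv 0 ((i:ℕ)+(j:ℕ)) : ℤ) : ℝ) := by
      ext i j
      simp only [hBent, Matrix.of_apply]
      have hcast : ((sqrtCoeff ((i:ℕ)+(j:ℕ)+1) : ℚ) : ℝ)
          = (-1)^((i:ℕ)+(j:ℕ)) * ((Tv 0 ((i:ℕ)+(j:ℕ)) : ℤ) : ℝ) / 2^(2*((i:ℕ)+(j:ℕ))+1) := by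
        have := sqrtCoeff_Tv_zero ((i:ℕ)+(j:ℕ))
        have := congrArg (Rat.cast : ℚ → ℝ) this
        push_cast at this ⊢
        convert this using 2
      rw [hcast]
      have h2 : (2:ℝ)^(2*((i:ℕ)+(j:ℕ))+1) = 2 * 4^((i:ℕ)+(j:ℕ)) := by
        rw [pow_succ']
        congr 1
        rw [show (4:ℝ) = 2^2 by norm_num, ← pow_mul]
      rw [h2, pow_add, pow_add]
      ring
    rw [this]
    exact det_scaled 0 m (by omega) _ (div_ne_zero (by norm_num) (mul_ne_zero two_ne_zero ha))
  · rw [if_neg hodd]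
    rw [cayleyPoly, if_neg hodd]
    set m := n / 2 - 1 with hm
    set Aent : Matrix (Fin m) (Fin m) ℝ :=
      Matrix.of fun i j => ((sqrtCoeff ((i:ℕ)+(j:ℕ)+3) : ℝ) + (sqrtCoeff ((i:ℕ)+(j:ℕ)+2) : ℝ)) with hAent
    set Bent : Matrix (Fin m) (Fin m) ℝ :=
      Matrix.of fun i j => (-(sqrtCoeff ((i:ℕ)+(j:ℕ)+2) : ℝ) * a⁻¹) with hBent
    have hMeq : (Matrix.of fun i j : Fin m => Bpoly a a ((i:ℕ) + (j:ℕ) + 3))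
        = Aent.map Polynomial.C + (X : ℝ[X]) • Bent.map Polynomial.C := by
      ext i j
      simp only [Matrix.add_apply, Matrix.smul_apply, Matrix.map_apply, Matrix.of_apply,
        hAent, hBent, smul_eq_mul]
      rw [show (i:ℕ) + (j:ℕ) + 3 = ((i:ℕ)+(j:ℕ)+2) + 1 by omega, Bpoly_circle a ha]
      rw [show (i:ℕ) + (j:ℕ) + 2 + 1 = (i:ℕ)+(j:ℕ)+3 by omega]
      ring
    rw [hMeq, det_linear_natDegree Aent Bent]
    have : Bent = Matrix.of fun i j : Fin m =>
        ((1:ℝ)/(8*a)) * ((-1)^(i:ℕ) / 4^(i:ℕ)) * ((-1)^(j:ℕ) / 4^(j:ℕ)) * ((Tv 1 ((i:ℕ)+(j:ℕ)) : ℤ) : ℝ) := by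
      ext i j
      simp only [hBent, Matrix.of_apply]
      have hcast : ((sqrtCoeff ((i:ℕ)+(j:ℕ)+2) : ℚ) : ℝ)
          = (-1)^((i:ℕ)+(j:ℕ)+1) * ((Tv 1 ((i:ℕ)+(j:ℕ)) : ℤ) : ℝ) / 2^(2*((i:ℕ)+(j:ℕ))+3) := by
        have := sqrtCoeff_Tv_one ((i:ℕ)+(j:ℕ))
        have := congrArg (Rat.cast : ℚ → ℝ) this
        push_cast at this ⊢
        convert this using 2
      rw [hcast]
      have h2 : (2:ℝ)^(2*((i:ℕ)+(j:ℕ))+3) = 8 * 4^((i:ℕ)+(j:ℕ)) := by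
        rw [show 2*((i:ℕ)+(j:ℕ))+3 = (2*((i:ℕ)+(j:ℕ))) + 3 by ring, pow_add]
        rw [show (4:ℝ) = 2^2 by norm_num, ← pow_mul]
        ring
      rw [h2, pow_add, pow_add, pow_succ]
      ring
    rw [this]
    exact det_scaled 1 m (by omega) _ (div_ne_zero one_ne_zero (mul_ne_zero (by norm_num) ha))
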